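/- There exists a field automorphism of the complex numbers that is not continuous: there is a ring isomorphism e : ℂ → ℂ such that e is not a continuous map with respect to the usual topology of ℂ. -/

import Mathlib

open Cardinal Set

noncomputable section

open Algebra MvPolynomial

/-- Given two transcendence bases of `ℂ` over `ℤ` indexed by the same type, there is a ring
automorphism of `ℂ` sending one basis to the other. -/
noncomputable def auxEquivOfBases {ι : Type} (v w : ι → ℂ)
    (hv : IsTranscendenceBasis ℤ v) (hw : IsTranscendenceBasis ℤ w) : ℂ ≃+* ℂ :=
  letI := IsAlgClosed.isAlgClosure_of_transcendence_basis v hv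
  letI := IsAlgClosed.isAlgClosure_of_transcendence_basis w hw
  IsAlgClosure.equivOfEquiv ℂ ℂ
    (hv.1.aevalEquiv.symm.toRingEquiv.trans hw.1.aevalEquiv.toRingEquiv)

theorem auxEquivOfBases_apply {ι : Type} (v w : ι → ℂ)
    (hv : IsTranscendenceBasis ℤ v) (hw : IsTranscendenceBasis ℤ w) (i : ι) :
    auxEquivOfBases v w hv hw (v i) = w i := by
  letI := IsAlgClosed.isAlgClosure_of_transcendence_basis v hv
  letI := IsAlgClosed.isAlgClosure_of_transcendence_basis w hw
  have h1 : v i = algebraMap (Algebra.adjoin ℤ (Set.range v)) ℂ (hv.1.aevalEquiv (X i)) := by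
    rw [hv.1.algebraMap_aevalEquiv, aeval_X]
  rw [auxEquivOfBases, h1, IsAlgClosure.equivOfEquiv_algebraMap]
  simp only [RingEquiv.coe_trans, Function.comp_apply, AlgEquiv.toRingEquiv_eq_coe,
    AlgEquiv.coe_ringEquiv, AlgEquiv.symm_apply_apply]
  rw [hw.1.algebraMap_aevalEquiv, aeval_X]

/-- Composing a transcendence basis with a permutation of the index type yields a
transcendence basis. -/
theorem isTranscendenceBasis_comp {ι : Type} {v : ι → ℂ} (hv : IsTranscendenceBasis ℤ v)
    (π : Equiv.Perm ι) : IsTranscendenceBasis ℤ (v ∘ π) := by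
  refine ⟨hv.1.comp π π.injective, fun s hs hsub => ?_⟩
  have hrange : Set.range (v ∘ π) = Set.range v := by
    rw [Set.range_comp, Equiv.range_eq_univ, Set.image_univ]
  rw [hrange] at hsub ⊢
  exact hv.2 s hs hsub

/-- There exists a discontinuous field automorphism of the complex numbers. -/
theorem exists_discontinuous_complex_automorphism :
    ∃ e : ℂ ≃+* ℂ, ¬ Continuous (⇑e) := by
  obtain ⟨s, hs⟩ := exists_isTranscendenceBasis ℤ ℂ
  -- the transcendence basis is infinite
  have hcard : #ℂ = #s :=
    Cardinal.lift_inj.mp (IsAlgClosed.cardinal_eq_cardinal_transcendence_basis_of_aleph0_lt _ hs (le_of_eq mk_int)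
      (by rw [mk_complex]; exact aleph0_lt_continuum))
  have : Infinite s := by
    rw [Cardinal.infinite_iff, ← hcard, mk_complex]
    exact aleph0_le_continuum
  -- pick three distinct elements of the basis
  obtain ⟨i, j, k, hij, hjk, hik⟩ : ∃ i j k : s, i ≠ j ∧ j ≠ k ∧ i ≠ k := by
    let f := Infinite.natEmbedding s
    exact ⟨f 0, f 1, f 2, fun h => by simpa using f.injective h,
      fun h => by simpa using f.injective h, fun h => by simpa using f.injective h⟩
  -- a 3-cycle like permutation: π i = k, π k = j
  set π : Equiv.Perm s := (Equiv.swap i j).trans (Equiv.swap j k) with hπ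
  have hπi : π i = k := by simp [hπ, Equiv.swap_apply_of_ne_of_ne, hij, hik, Equiv.swap_apply_left]
  have hπk : π k = j := by
    simp [hπ, Equiv.swap_apply_of_ne_of_ne, hik.symm, hjk.symm, Equiv.swap_apply_right]
  set v : s → ℂ := Subtype.val with hvdef
  have hw : IsTranscendenceBasis ℤ (v ∘ π) := isTranscendenceBasis_comp hs π
  have hvinj : Function.Injective v := Subtype.val_injective
  refine ⟨auxEquivOfBases v (v ∘ π) hs hw, fun hcont => ?_⟩
  set e := auxEquivOfBases v (v ∘ π) hs hw with he
  have hei : e (v i) = v k := by rw [he, auxEquivOfBases_apply, Function.comp_apply, hπi]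
  have hek : e (v k) = v j := by rw [he, auxEquivOfBases_apply, Function.comp_apply, hπk]
  rcases Complex.ringHom_eq_id_or_conj_of_continuous
      (f := (e : ℂ →+* ℂ)) hcont with h | h
  · -- e = id, but e (v i) = v k ≠ v i
    have : v i = v k := by
      rw [← hei]
      exact (RingHom.congr_fun h (v i)).symm
    exact hik (hvinj this)
  · -- e = conj, but then e (e (v i)) = v i while it equals v j
    have h2 : ∀ z, e (e z) = z := by
      intro z
      have h1 : e z = (starRingEnd ℂ) z := RingHom.congr_fun h z
      have h1' : e (e z) = (starRingEnd ℂ) (e z) := RingHom.congr_fun h (e z)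
      rw [h1', h1, Complex.conj_conj]
    have : v j = v i := by rw [← h2 (v i), hei, hek]
    exact hij (hvinj this).symm
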